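/- Let x̄ be a local optimal solution of min f(x) subject to g(x) ∈ Λ (f, g twice continuously differentiable, Λ closed), and suppose g(x) − Λ is metrically subregular at (x̄, 0) in direction d ∈ C(x̄) = {d : ∇g(x̄)d ∈ T_Λ(g(x̄)), ∇f(x̄)d ≤ 0}. Then for every w with ∇g(x̄)w + ∇²g(x̄)(d,d) ∈ T_Λ²(g(x̄); ∇g(x̄)d), one has ∇f(x̄)w + ∇²f(x̄)(d,d) ≥ 0. -/

import Mathlib

open Filter Topology Pointwise RealInnerProductSpace

section Defs
variable {E F : Type*}
variable [NormedAddCommGroup E] [InnerProductSpace ℝ E]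
variable [NormedAddCommGroup F] [InnerProductSpace ℝ F]

/-- Bouligand (contingent) tangent cone, via sequences. -/
def tangentCone' (S : Set E) (x : E) : Set E :=
  {d | ∃ t : ℕ → ℝ, ∃ v : ℕ → E, (∀ k, 0 < t k) ∧ Tendsto t atTop (𝓝 0) ∧
    Tendsto v atTop (𝓝 d) ∧ ∀ k, x + t k • v k ∈ S}

/-- Outer second-order tangent set. -/
def tangentCone2 (S : Set E) (x d : E) : Set E :=
  {w | ∃ t : ℕ → ℝ, ∃ v : ℕ → E, (∀ k, 0 < t k) ∧ Tendsto t atTop (𝓝 0) ∧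
    Tendsto v atTop (𝓝 w) ∧ ∀ k, x + t k • d + ((t k)^2 / 2) • v k ∈ S}

/-- Regular (Fréchet) normal cone. -/
def frechetNormal (S : Set E) (x : E) : Set E :=
  {v | ∀ ε > (0:ℝ), ∃ δ > (0:ℝ), ∀ y ∈ S, ‖y - x‖ ≤ δ → ⟪v, y - x⟫ ≤ ε * ‖y - x‖}

/-- Limiting (Mordukhovich) normal cone. -/
def limNormal (S : Set E) (x : E) : Set E :=
  {v | ∃ xk vk : ℕ → E, (∀ k, xk k ∈ S) ∧ Tendsto xk atTop (𝓝 x) ∧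
    Tendsto vk atTop (𝓝 v) ∧ ∀ k, vk k ∈ frechetNormal S (xk k)}

/-- Directional limiting normal cone. -/
def dirLimNormal (S : Set E) (x d : E) : Set E :=
  {v | ∃ t : ℕ → ℝ, ∃ dk vk : ℕ → E, (∀ k, 0 < t k) ∧ Tendsto t atTop (𝓝 0) ∧
    Tendsto dk atTop (𝓝 d) ∧ Tendsto vk atTop (𝓝 v) ∧
    ∀ k, vk k ∈ frechetNormal S (x + t k • dk k)}

/-- Directional regular (Clarke) tangent cone. -/
def dirRegTangent (S : Set E) (x d : E) : Set E :=
  {v | ∀ t : ℕ → ℝ, ∀ dk : ℕ → E, (∀ k, 0 < t k) → Tendsto t atTop (𝓝 0) →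
    Tendsto dk atTop (𝓝 d) → (∀ k, x + t k • dk k ∈ S) →
    ∃ vk : ℕ → E, Tendsto vk atTop (𝓝 v) ∧ ∀ k, vk k ∈ tangentCone' S (x + t k • dk k)}

/-- Regular (Clarke) tangent cone, via sequences. -/
def clarkeTangent (S : Set E) (x : E) : Set E :=
  {v | ∀ t : ℕ → ℝ, ∀ xk : ℕ → E, (∀ k, 0 < t k) → Tendsto t atTop (𝓝 0) →
    (∀ k, xk k ∈ S) → Tendsto xk atTop (𝓝 x) →
    ∃ vk : ℕ → E, Tendsto vk atTop (𝓝 v) ∧ ∀ k, xk k + t k • vk k ∈ S}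

/-- Polar cone. -/
def polarCone (K : Set E) : Set E := {v | ∀ w ∈ K, ⟪v, w⟫ ≤ 0}

/-- Directional neighborhood V_{ρ,δ}(d). -/
def dirNbhd (ρ δ : ℝ) (d : E) : Set E :=
  {w | ‖w‖ < ρ ∧ ‖‖d‖ • w - ‖w‖ • d‖ ≤ δ * (‖w‖ * ‖d‖)}

/-- Metric subregularity of x ↦ g(x) - Λ at (x,0) in direction d. -/
def dirMetrSubreg (g : E → F) (Λ : Set F) (x d : E) : Prop :=
  ∃ κ > (0:ℝ), ∃ ρ > (0:ℝ), ∃ δ > (0:ℝ), ∀ y : E, y - x ∈ dirNbhd ρ δ d →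
    Metric.infDist y {z | g z ∈ Λ} ≤ κ * Metric.infDist (g y) Λ

/-- Metric subregularity in direction d with modulus κ. -/
def dirMetrSubregMod (g : E → F) (Λ : Set F) (x d : E) (κ : ℝ) : Prop :=
  ∀ κ' > κ, ∃ ρ > (0:ℝ), ∃ δ > (0:ℝ), ∀ y : E, y - x ∈ dirNbhd ρ δ d →
    Metric.infDist y {z | g z ∈ Λ} ≤ κ' * Metric.infDist (g y) Λ

/-- Support function, with values in EReal. -/
noncomputable def suppFn (S : Set E) (l : E) : EReal :=
  sSup ((fun u => ((⟪l, u⟫ : ℝ) : EReal)) '' S)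

/-- Lower generalized support function. -/
noncomputable def sigmaHat (S : Set E) (l : E) : EReal :=
  liminf (fun l' => sInf ((fun u => ((⟪l', u⟫ : ℝ) : EReal)) '' {u | l' ∈ limNormal S u})) (𝓝 l)

end Defs


open Asymptotics

lemma taylor2_aux {E G : Type*} [NormedAddCommGroup E] [NormedSpace ℝ E]
    [NormedAddCommGroup G] [NormedSpace ℝ G]
    (h : E → G) (hh : ContDiff ℝ 2 h) (x d w : E) :
    (fun t : ℝ => h (x + t • d + (t^2/2) • w) - h x - t • (fderiv ℝ h x d)
      - (t^2/2) • (fderiv ℝ h x w + iteratedFDeriv ℝ 2 h x ![d, d]))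
      =o[𝓝 0] (fun t => t^2) := by
  set c : ℝ → E := fun t => x + t • d + (t^2/2) • w with hc_def
  have hdiff : Differentiable ℝ h := hh.differentiable two_ne_zero
  have hc : ∀ t : ℝ, HasDerivAt c (d + t • w) t := by
    intro t
    have h1 : HasDerivAt (fun t : ℝ => t • d) ((1:ℝ) • d) t :=
      (hasDerivAt_id t).smul_const d
    have h2 : HasDerivAt (fun t : ℝ => (t^2/2) • w) (t • w) t := by
      have : HasDerivAt (fun t : ℝ => t^2/2) t t := by
        simpa using ((hasDerivAt_pow 2 t).div_const 2)
      exact this.smul_const w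
    simpa [Pi.add_def] using ((hasDerivAt_const t x).add h1).add h2
  have hc0 : c 0 = x := by simp [hc_def]
  -- derivative of φ = h ∘ c
  set D : ℝ → G := fun t => (fderiv ℝ h (c t)) (d + t • w) with hD_def
  have hφ : ∀ t : ℝ, HasDerivAt (fun s => h (c s)) (D t) t := by
    intro t
    exact (hdiff (c t)).hasFDerivAt.comp_hasDerivAt t (hc t)
  -- second derivative at 0
  set q : G := (fderiv ℝ (fderiv ℝ h) x d) d + (fderiv ℝ h x) w with hq_def
  have hD0 : HasDerivAt D q 0 := by
    have hA : HasDerivAt (fun t => fderiv ℝ h (c t)) ((fderiv ℝ (fderiv ℝ h) x) d) 0 := by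
      have h1 : ContDiff ℝ 1 (fderiv ℝ h) := hh.fderiv_right (by norm_num)
      have h2 : HasFDerivAt (fderiv ℝ h) (fderiv ℝ (fderiv ℝ h) x) (c 0) := by
        rw [hc0]; exact (h1.differentiable one_ne_zero x).hasFDerivAt
      have := h2.comp_hasDerivAt 0 (hc 0)
      simpa [Function.comp_def] using this
    have hu : HasDerivAt (fun t : ℝ => d + t • w) w 0 := by
      simpa [Pi.add_def] using (hasDerivAt_const (0:ℝ) d).add ((hasDerivAt_id (0:ℝ)).smul_const w)
    have := hA.clm_apply hu
    simp only [hc0, zero_smul, add_zero] at this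
    exact this
  have hD0' : (fun t : ℝ => D t - D 0 - t • q) =o[𝓝 0] (fun t => t) := by
    have := hasDerivAt_iff_isLittleO.mp hD0
    simpa using this
  -- ψ and its derivative
  set ψ : ℝ → G := fun t => h (c t) - h (c 0) - t • D 0 - (t^2/2) • q with hψ_def
  have hψ' : ∀ t : ℝ, HasDerivAt ψ (D t - D 0 - t • q) t := by
    intro t
    have h1 : HasDerivAt (fun s : ℝ => s • D 0) ((1:ℝ) • D 0) t := (hasDerivAt_id t).smul_const _
    have h2 : HasDerivAt (fun s : ℝ => (s^2/2) • q) (t • q) t := by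
      have : HasDerivAt (fun s : ℝ => s^2/2) t t := by
        simpa using ((hasDerivAt_pow 2 t).div_const 2)
      exact this.smul_const q
    have := (((hφ t).sub (hasDerivAt_const t (h (c 0)))).sub h1).sub h2
    simpa [hψ_def, sub_sub, Pi.add_def, Pi.sub_def] using this
  have hψo : ψ =o[𝓝 0] (fun t : ℝ => t^2) := by
    rw [isLittleO_iff]
    intro ε hε
    rw [isLittleO_iff] at hD0'
    have hball := Metric.eventually_nhds_iff.mp (hD0' hε)
    obtain ⟨δ, hδ, hb⟩ := hball
    rw [Metric.eventually_nhds_iff]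
    refine ⟨δ, hδ, fun t ht => ?_⟩
    have key : ‖ψ t - ψ 0‖ ≤ (ε * ‖t‖) * ‖t - 0‖ := by
      apply (convex_uIcc (0:ℝ) t).norm_image_sub_le_of_norm_hasDerivWithin_le
        (fun s hs => (hψ' s).hasDerivWithinAt) ?_ Set.left_mem_uIcc Set.right_mem_uIcc
      intro s hs
      have hst : ‖s‖ ≤ ‖t‖ := by
        rcases Set.mem_uIcc.mp hs with ⟨h1, h2⟩ | ⟨h1, h2⟩ <;>
          · rw [Real.norm_eq_abs, Real.norm_eq_abs] <;> rw [abs_le] <;>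
            constructor <;> nlinarith [abs_nonneg t, le_abs_self t, neg_abs_le t]
      have hsδ : dist s 0 < δ := by
        simp only [dist_zero_right] at ht ⊢
        exact lt_of_le_of_lt hst ht
      calc ‖D s - D 0 - s • q‖ ≤ ε * ‖s‖ := hb hsδ
        _ ≤ ε * ‖t‖ := by nlinarith
    have hψ0 : ψ 0 = 0 := by simp [hψ_def]
    rw [hψ0, sub_zero, sub_zero] at key
    calc ‖ψ t‖ ≤ ε * ‖t‖ * ‖t‖ := key
      _ = ε * ‖t^2‖ := by rw [norm_pow]; ring
  -- identify ψ with the target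
  have hD0v : D 0 = fderiv ℝ h x d := by simp [hD_def, hc0]
  have hqv : q = fderiv ℝ h x w + iteratedFDeriv ℝ 2 h x ![d, d] := by
    rw [hq_def, iteratedFDeriv_two_apply]
    simp [add_comm]
  refine hψo.congr' ?_ (by rfl)
  filter_upwards with t
  simp [hψ_def, hc0, hD0v, hqv, hc_def]

set_option maxHeartbeats 1000000 in
theorem stmt_15 {n m : ℕ} (f : EuclideanSpace ℝ (Fin n) → ℝ)
    (g : EuclideanSpace ℝ (Fin n) → EuclideanSpace ℝ (Fin m))
    (hf : ContDiff ℝ 2 f) (hg : ContDiff ℝ 2 g)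
    (Λ : Set (EuclideanSpace ℝ (Fin m))) (hΛ : IsClosed Λ)
    (xb : EuclideanSpace ℝ (Fin n)) (hx : g xb ∈ Λ)
    (hmin : IsLocalMinOn f {x | g x ∈ Λ} xb)
    (d : EuclideanSpace ℝ (Fin n))
    (hd1 : fderiv ℝ g xb d ∈ tangentCone' Λ (g xb)) (hd2 : fderiv ℝ f xb d ≤ 0)
    (hM : dirMetrSubreg g Λ xb d) :
    ∀ w : EuclideanSpace ℝ (Fin n),
      fderiv ℝ g xb w + iteratedFDeriv ℝ 2 g xb ![d, d] ∈
        tangentCone2 Λ (g xb) (fderiv ℝ g xb d) →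
      0 ≤ fderiv ℝ f xb w + iteratedFDeriv ℝ 2 f xb ![d, d] := by
  intro w hw
  obtain ⟨t, v, ht, ht0, hv, hvmem⟩ := hw
  obtain ⟨κ, hκ, ρ, hρ, δ, hδ, hsub⟩ := hM
  set z : EuclideanSpace ℝ (Fin m) := fderiv ℝ g xb w + iteratedFDeriv ℝ 2 g xb ![d, d]
    with hz_def
  set q : ℝ := fderiv ℝ f xb w + iteratedFDeriv ℝ 2 f xb ![d, d] with hq_def
  set xk : ℕ → EuclideanSpace ℝ (Fin n) :=
    fun k => xb + (t k) • d + ((t k)^2/2) • w with hxk_def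
  set F : Set (EuclideanSpace ℝ (Fin n)) := {x | g x ∈ Λ} with hF_def
  have hFne : F.Nonempty := ⟨xb, hx⟩
  clear_value z q xk F
  have htpos2 : ∀ k, (0:ℝ) < (t k)^2 := fun k => pow_pos (ht k) 2
  -- Taylor remainders along the sequence
  set rg : ℕ → EuclideanSpace ℝ (Fin m) :=
    fun k => g (xk k) - g xb - (t k) • (fderiv ℝ g xb d) - ((t k)^2/2) • z with hrg_def
  set rf : ℕ → ℝ :=
    fun k => f (xk k) - f xb - (t k) * (fderiv ℝ f xb d) - ((t k)^2/2) * q with hrf_def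
  clear_value rg rf
  have hrg : Tendsto (fun k => ‖rg k‖ / (t k)^2) atTop (𝓝 0) := by
    have h1 := (taylor2_aux g hg xb d w).comp_tendsto ht0
    have h2 : (fun k => rg k) =o[atTop] (fun k => (t k)^2) := by
      refine h1.congr' ?_ ?_
      · filter_upwards with k
        simp only [hrg_def, hxk_def, hz_def, Function.comp_apply]
      · filter_upwards with k
        rfl
    exact h2.norm_left.tendsto_div_nhds_zero
  have hrf : Tendsto (fun k => rf k / (t k)^2) atTop (𝓝 0) := by
    have h1 := (taylor2_aux f hf xb d w).comp_tendsto ht0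
    have h2 : (fun k => rf k) =o[atTop] (fun k => (t k)^2) := by
      refine h1.congr' ?_ ?_
      · filter_upwards with k
        simp only [hrf_def, hxk_def, hq_def, Function.comp_apply, smul_eq_mul]
      · filter_upwards with k
        rfl
    exact h2.tendsto_div_nhds_zero
  -- distance of g (xk k) to Λ
  have hgdist : ∀ k, Metric.infDist (g (xk k)) Λ ≤ ‖rg k‖ + ((t k)^2/2) * ‖z - v k‖ := by
    intro k
    have hmem := hvmem k
    calc Metric.infDist (g (xk k)) Λ
        ≤ dist (g (xk k)) (g xb + t k • (fderiv ℝ g xb d) + ((t k)^2/2) • v k) :=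
          Metric.infDist_le_dist_of_mem hmem
      _ = ‖rg k + ((t k)^2/2) • (z - v k)‖ := by
          rw [dist_eq_norm]; congr 1
          simp only [hrg_def, smul_sub]; abel
      _ ≤ ‖rg k‖ + ‖((t k)^2/2) • (z - v k)‖ := norm_add_le _ _
      _ = ‖rg k‖ + ((t k)^2/2) * ‖z - v k‖ := by
          rw [norm_smul, Real.norm_eq_abs, abs_of_nonneg (by positivity)]
  have hxk_sub : ∀ k, xk k - xb = (t k) • (d + (t k / 2) • w) := by
    intro k
    simp only [hxk_def, smul_add, smul_smul]
    rw [show t k * (t k / 2) = (t k)^2/2 by ring]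
    abel
  have hxk0 : Tendsto (fun k => xk k - xb) atTop (𝓝 0) := by
    have h1 : Tendsto (fun k => (t k) • d) atTop (𝓝 ((0:ℝ) • d)) := ht0.smul_const d
    have h2 : Tendsto (fun k => ((t k)^2/2) • w) atTop (𝓝 (((0:ℝ)^2/2) • w)) :=
      (((ht0.pow 2).div_const 2)).smul_const w
    have h3 := h1.add h2
    have he : (fun k => xk k - xb) = fun k => (t k) • d + ((t k)^2/2) • w := by
      funext k; simp only [hxk_def]; abel
    rw [he]
    norm_num at h3
    simpa using h3
  -- xk k - xb eventually in directional neighborhood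
  have hdir : ∀ᶠ k in atTop, xk k - xb ∈ dirNbhd ρ δ d := by
    have hnorm_small : ∀ᶠ k in atTop, ‖xk k - xb‖ < ρ := by
      have := hxk0.norm
      simp only [norm_zero] at this
      exact this.eventually_lt_const hρ
    by_cases hd0 : d = 0
    · filter_upwards [hnorm_small] with k hk
      refine ⟨hk, ?_⟩
      simp [hd0]
    · have hdn : 0 < ‖d‖ := norm_pos_iff.mpr hd0
      have hmk : Tendsto (fun k => ‖d + (t k / 2) • w‖) atTop (𝓝 ‖d‖) := by
        have h1 : Tendsto (fun k => d + (t k / 2) • w) atTop (𝓝 (d + ((0:ℝ)/2) • w)) :=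
          tendsto_const_nhds.add ((ht0.div_const 2).smul_const w)
        simpa using h1.norm
      have hsml : ∀ᶠ k in atTop, t k * ‖w‖ < δ * ‖d + (t k / 2) • w‖ := by
        have h1 : Tendsto (fun k => t k * ‖w‖) atTop (𝓝 (0 * ‖w‖)) := ht0.mul_const _
        have h2 : Tendsto (fun k => δ * ‖d + (t k / 2) • w‖) atTop (𝓝 (δ * ‖d‖)) :=
          hmk.const_mul δ
        exact (by simpa using h1 : Tendsto (fun k => t k * ‖w‖) atTop (𝓝 0)).eventually_lt
          h2 (mul_pos hδ hdn)
      filter_upwards [hnorm_small, hsml] with k hk1 hk2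
      refine ⟨hk1, ?_⟩
      set mk := d + (t k / 2) • w with hmk_def
      have hu : xk k - xb = (t k) • mk := hxk_sub k
      have hun : ‖xk k - xb‖ = t k * ‖mk‖ := by
        rw [hu, norm_smul, Real.norm_eq_abs, abs_of_pos (ht k)]
      have key : ‖‖d‖ • ((t k) • mk) - (t k * ‖mk‖) • d‖ ≤ t k * (t k * ‖w‖) * ‖d‖ := by
        have e1 : ‖d‖ • ((t k) • mk) - (t k * ‖mk‖) • d
            = (t k) • (‖d‖ • mk - ‖mk‖ • d) := by
          module
        rw [e1, norm_smul, Real.norm_eq_abs, abs_of_pos (ht k)]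
        have e2 : ‖d‖ • mk - ‖mk‖ • d = ‖d‖ • (mk - d) + (‖d‖ - ‖mk‖) • d := by
          rw [smul_sub, sub_smul]; abel
        have e3 : ‖mk - d‖ = (t k / 2) * ‖w‖ := by
          rw [show mk - d = (t k / 2) • w by rw [hmk_def]; abel]
          rw [norm_smul, Real.norm_eq_abs, abs_of_pos (half_pos (ht k))]
        have e4 : ‖‖d‖ • mk - ‖mk‖ • d‖ ≤ t k * ‖w‖ * ‖d‖ := by
          rw [e2]
          calc ‖‖d‖ • (mk - d) + (‖d‖ - ‖mk‖) • d‖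
              ≤ ‖‖d‖ • (mk - d)‖ + ‖(‖d‖ - ‖mk‖) • d‖ := norm_add_le _ _
            _ = ‖d‖ * ‖mk - d‖ + |‖d‖ - ‖mk‖| * ‖d‖ := by
                rw [norm_smul, norm_smul, Real.norm_eq_abs, Real.norm_eq_abs,
                  abs_of_nonneg (norm_nonneg d)]
            _ ≤ ‖d‖ * ‖mk - d‖ + ‖mk - d‖ * ‖d‖ := by
                have h5 := abs_norm_sub_norm_le d mk
                rw [show d - mk = -(mk - d) by abel, norm_neg] at h5
                nlinarith [norm_nonneg d]
            _ = t k * ‖w‖ * ‖d‖ := by rw [e3]; ring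
        nlinarith [ht k, norm_nonneg (‖d‖ • mk - ‖mk‖ • d)]
      rw [hu, norm_smul, Real.norm_eq_abs, abs_of_pos (ht k)]
      calc ‖‖d‖ • ((t k) • mk) - (t k * ‖mk‖) • d‖
          ≤ t k * (t k * ‖w‖) * ‖d‖ := key
        _ ≤ t k * (δ * ‖mk‖) * ‖d‖ :=
            mul_le_mul_of_nonneg_right
              (mul_le_mul_of_nonneg_left hk2.le (ht k).le) (norm_nonneg d)
        _ = δ * (t k * ‖mk‖ * ‖d‖) := by ring
  -- choose nearby feasible points
  have hy : ∀ k, ∃ y ∈ F, dist (xk k) y < Metric.infDist (xk k) F + (t k)^3 := by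
    intro k
    exact (Metric.infDist_lt_iff hFne).mp
      (lt_add_of_pos_right _ (pow_pos (ht k) 3))
  choose y hyF hyd using hy
  set b : ℕ → ℝ := fun k => dist (xk k) (y k) with hb_def
  clear_value b
  have hbk : ∀ k, b k = dist (xk k) (y k) := fun k => by rw [hb_def]
  have hbnn : ∀ k, 0 ≤ b k := fun k => (hbk k) ▸ dist_nonneg
  have hb_bound : ∀ᶠ k in atTop,
      b k ≤ κ * (‖rg k‖ + ((t k)^2/2) * ‖z - v k‖) + (t k)^3 := by
    filter_upwards [hdir] with k hk
    have h1 := hsub (xk k) hk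
    have h2 := hgdist k
    have h3 := hyd k
    have h4 : Metric.infDist (xk k) F ≤ κ * (‖rg k‖ + ((t k)^2/2) * ‖z - v k‖) :=
      le_trans h1 (by nlinarith)
    calc b k = dist (xk k) (y k) := hbk k
      _ ≤ Metric.infDist (xk k) F + (t k)^3 := le_of_lt h3
      _ ≤ κ * (‖rg k‖ + ((t k)^2/2) * ‖z - v k‖) + (t k)^3 := by linarith
  have hzv : Tendsto (fun k => ‖z - v k‖) atTop (𝓝 0) := by
    have h1 : Tendsto (fun k => z - v k) atTop (𝓝 (z - z)) := tendsto_const_nhds.sub hv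
    simpa using h1.norm
  have hbd : Tendsto (fun k => b k / (t k)^2) atTop (𝓝 0) := by
    have hmaj : Tendsto (fun k => κ * (‖rg k‖/(t k)^2 + ‖z - v k‖/2) + t k)
        atTop (𝓝 (κ * (0 + 0/2) + 0)) :=
      ((hrg.add (hzv.div_const 2)).const_mul κ).add ht0
    norm_num at hmaj
    apply squeeze_zero' ?_ ?_ hmaj
    · filter_upwards with k
      exact div_nonneg (hbnn k) (htpos2 k).le
    · filter_upwards [hb_bound] with k hk
      rw [div_le_iff₀ (htpos2 k)]
      have e : (κ * (‖rg k‖/(t k)^2 + ‖z - v k‖/2) + t k) * (t k)^2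
          = κ * ((‖rg k‖/(t k)^2) * (t k)^2 + ((t k)^2/2) * ‖z - v k‖) + (t k)^3 := by
        ring
      rw [e, div_mul_cancel₀ _ (ne_of_gt (htpos2 k))]
      exact hk
  have hb0 : Tendsto b atTop (𝓝 0) := by
    have h1 := hbd.mul (ht0.pow 2)
    simp only [zero_mul] at h1
    exact Tendsto.congr (fun k => div_mul_cancel₀ (b k) (ne_of_gt (htpos2 k))) h1
  have hxkt : Tendsto xk atTop (𝓝 xb) := by
    have h1 : Tendsto (fun k => (xk k - xb) + xb) atTop (𝓝 (0 + xb)) :=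
      hxk0.add tendsto_const_nhds
    simpa using h1
  have hyt : Tendsto y atTop (𝓝 xb) := by
    refine tendsto_iff_dist_tendsto_zero.mpr ?_
    apply squeeze_zero (fun k => dist_nonneg) (g := fun k => b k + dist (xk k) xb)
    · intro k
      calc dist (y k) xb ≤ dist (y k) (xk k) + dist (xk k) xb := dist_triangle _ _ _
        _ = b k + dist (xk k) xb := by rw [hbk k, dist_comm]
    · have h2 : Tendsto (fun k => dist (xk k) xb) atTop (𝓝 0) :=
        tendsto_iff_dist_tendsto_zero.mp hxkt
      simpa using hb0.add h2
  -- local minimality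
  have hmin' : ∀ᶠ x in 𝓝[F] xb, f xb ≤ f x := hmin
  have hyFt : Tendsto y atTop (𝓝[F] xb) :=
    tendsto_nhdsWithin_iff.mpr ⟨hyt, Eventually.of_forall hyF⟩
  have hfy : ∀ᶠ k in atTop, f xb ≤ f (y k) := hyFt.eventually hmin'
  -- Lipschitz constant for f near xb
  obtain ⟨K, U, hU, hK⟩ := (hf.of_le one_le_two).contDiffAt.exists_lipschitzOnWith
    (x := xb)
  have hK0 : (0:ℝ) ≤ (K:ℝ) := K.coe_nonneg
  have hfinal : ∀ᶠ k in atTop, (-(K:ℝ) * b k - rf k) / (t k)^2 * 2 ≤ q := by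
    have hev1 : ∀ᶠ k in atTop, xk k ∈ U := hxkt hU
    have hev2 : ∀ᶠ k in atTop, y k ∈ U := hyt hU
    filter_upwards [hev1, hev2, hfy] with k hk1 hk2 hk3
    have hlip : dist (f (xk k)) (f (y k)) ≤ (K:ℝ) * b k := by
      rw [hbk k]; exact hK.dist_le_mul (xk k) hk1 (y k) hk2
    rw [Real.dist_eq] at hlip
    have habs := abs_le.mp hlip
    have hfx : f (xk k) = f xb + t k * (fderiv ℝ f xb d) + ((t k)^2/2) * q + rf k := by
      simp only [hrf_def]; ring
    have hneg : t k * (fderiv ℝ f xb d) ≤ 0 :=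
      mul_nonpos_of_nonneg_of_nonpos (le_of_lt (ht k)) hd2
    have h5 : -(K:ℝ) * b k - rf k ≤ ((t k)^2/2) * q := by nlinarith [habs.1, habs.2]
    rw [div_mul_eq_mul_div, div_le_iff₀ (htpos2 k)]
    linarith
  have hclim : Tendsto (fun k => (-(K:ℝ) * b k - rf k) / (t k)^2 * 2) atTop (𝓝 0) := by
    have h1 : Tendsto (fun k => (-(K:ℝ) * (b k / (t k)^2) - rf k / (t k)^2) * 2)
        atTop (𝓝 ((-(K:ℝ) * 0 - 0) * 2)) :=
      ((hbd.const_mul (-(K:ℝ))).sub hrf).mul_const 2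
    norm_num at h1
    refine h1.congr fun k => ?_
    have hne := ne_of_gt (htpos2 k)
    field_simp
  exact le_of_tendsto hclim hfinal
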